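/- Let T be a connected finite Γ-colored d-complete poset with Γ simply laced such that Ch(T) = T (so T equals its own top tree and each color occurs exactly once). Suppose s ∈ T covers exactly two elements of T and every element of T other than s covers at most one element of T. Then for every b ∈ Γ, L_b(T) ≤ 2, and for c ∈ Γ, L_c(T) = 2 if and only if c = κ(s). -/

import Mathlib

/-!
Common definitions: Dynkin diagram data, Γ-colored posets, and the coloring
properties EC, NA, AC, ICE2, UCB1, LCB1 from the paper, together with
Γ-colored d-complete and Γ-colored minuscule posets, top trees, slant
irreducibility, extensions, lower frontier censuses, and full heaps.
-/

universe u v w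

variable {Γ : Type u} {P : Type v}

/-- The integers `θ a b` form a Dynkin diagram datum. -/
def DynkinDatum (θ : Γ → Γ → ℤ) : Prop :=
  (∀ a : Γ, θ a a = 2) ∧ (∀ a b : Γ, a ≠ b → θ a b ≤ 0) ∧
    (∀ a b : Γ, a ≠ b → (θ a b = 0 ↔ θ b a = 0))

/-- Colors `a` and `b` are adjacent. -/
def AdjColor (θ : Γ → Γ → ℤ) (a b : Γ) : Prop := θ a b < 0

/-- The Dynkin diagram is simply laced. -/
def SimplyLaced (θ : Γ → Γ → ℤ) : Prop :=
  ∀ a b : Γ, a ≠ b → θ a b = 0 ∨ θ a b = -1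

/-- All closed intervals are finite. -/
def LocallyFinitePoset (α : Type*) [PartialOrder α] : Prop :=
  ∀ x y : α, (Set.Icc x y).Finite

/-- A poset is connected if it cannot be written as a disjoint union of two nonempty
subposets with no comparabilities between them. -/
def ConnectedPoset (α : Type*) [PartialOrder α] : Prop :=
  ∀ S : Set α, S.Nonempty → Sᶜ.Nonempty → ∃ x ∈ S, ∃ y ∈ Sᶜ, x ≤ y ∨ y ≤ x

section
variable [PartialOrder P]

/-- (EC) Elements with equal colors are comparable. -/
def ColoredEC (κ : P → Γ) : Prop := ∀ x y : P, κ x = κ y → x ≤ y ∨ y ≤ x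

/-- (NA) Neighbors have adjacent colors. -/
def ColoredNA (θ : Γ → Γ → ℤ) (κ : P → Γ) : Prop :=
  ∀ x y : P, x ⋖ y → AdjColor θ (κ x) (κ y)

/-- (AC) Elements with adjacent colors are comparable. -/
def ColoredAC (θ : Γ → Γ → ℤ) (κ : P → Γ) : Prop :=
  ∀ x y : P, AdjColor θ (κ x) (κ y) → x ≤ y ∨ y ≤ x

/-- (ICE2) Between consecutive elements of a color `a`, the census of colors
adjacent to `a` is two. -/
def ColoredICE2 (θ : Γ → Γ → ℤ) (κ : P → Γ) : Prop :=
  ∀ (a : Γ) (x y : P), κ x = a → κ y = a → x < y → (∀ z ∈ Set.Ioo x y, κ z ≠ a) →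
    (∑ᶠ z ∈ Set.Ioo x y, -θ (κ z) a) = 2

/-- `U(x,P)`: elements above `x` with color adjacent to that of `x`. -/
def USet (θ : Γ → Γ → ℤ) (κ : P → Γ) (x : P) : Set P :=
  {y : P | x < y ∧ AdjColor θ (κ y) (κ x)}

/-- `L(x,P)`: elements below `x` with color adjacent to that of `x`. -/
def LSet (θ : Γ → Γ → ℤ) (κ : P → Γ) (x : P) : Set P :=
  {y : P | y < x ∧ AdjColor θ (κ y) (κ x)}

/-- (UCB1) Upper frontier census bound. -/
def ColoredUCB1 (θ : Γ → Γ → ℤ) (κ : P → Γ) : Prop :=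
  ∀ x : P, (∀ y : P, κ y = κ x → ¬x < y) →
    (USet θ κ x).Finite ∧ (∑ᶠ y ∈ USet θ κ x, -θ (κ y) (κ x)) ≤ 1

/-- (LCB1) Lower frontier census bound. -/
def ColoredLCB1 (θ : Γ → Γ → ℤ) (κ : P → Γ) : Prop :=
  ∀ x : P, (∀ y : P, κ y = κ x → ¬y < x) →
    (LSet θ κ x).Finite ∧ (∑ᶠ y ∈ LSet θ κ x, -θ (κ y) (κ x)) ≤ 1

/-- A Γ-colored d-complete poset: locally finite, surjectively colored, and
satisfying EC, NA, AC, ICE2, and UCB1. -/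
def GColoredDComplete (θ : Γ → Γ → ℤ) (κ : P → Γ) : Prop :=
  LocallyFinitePoset P ∧ Function.Surjective κ ∧ ColoredEC κ ∧ ColoredNA θ κ ∧
    ColoredAC θ κ ∧ ColoredICE2 θ κ ∧ ColoredUCB1 θ κ

/-- A Γ-colored minuscule poset: Γ-colored d-complete and LCB1. -/
def GColoredMinuscule (θ : Γ → Γ → ℤ) (κ : P → Γ) : Prop :=
  GColoredDComplete θ κ ∧ ColoredLCB1 θ κ

/-- The top tree: the set of elements maximal in their color class. -/
def TopTree (κ : P → Γ) : Set P := {x : P | ∀ y : P, κ y = κ x → ¬x < y}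

/-- `x` is covered by `y` within the subposet `S`. -/
def CoversIn (S : Set P) (x y : P) : Prop :=
  x ∈ S ∧ y ∈ S ∧ x < y ∧ ∀ z ∈ S, x < z → ¬z < y

/-- Slant irreducibility of a Γ-colored d-complete poset. -/
def SlantIrreducible (κ : P → Γ) : Prop :=
  ConnectedPoset P ∧ ∀ x y : P, CoversIn (TopTree κ) x y → ∃ z : P, z ≠ y ∧ κ z = κ y

/-- A saturated chain in a subposet `S`: a chain that is convex in `S`. -/
def SaturatedChainIn (S C : Set P) : Prop :=
  C ⊆ S ∧ IsChain (· ≤ ·) C ∧ ∀ x ∈ C, ∀ y ∈ C, ∀ z ∈ S, x < z → z < y → z ∈ C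

/-- The lower frontier census at the element `y`. -/
noncomputable def LCensus (θ : Γ → Γ → ℤ) (κ : P → Γ) (y : P) : ℤ :=
  ∑ᶠ x ∈ LSet θ κ y, -θ (κ x) (κ y)

/-- A full heap: locally finite, surjectively colored, EC, NA, AC, ICE2, and every
color class order-isomorphic to ℤ. -/
def FullHeap (θ : Γ → Γ → ℤ) (κ : P → Γ) : Prop :=
  LocallyFinitePoset P ∧ Function.Surjective κ ∧ ColoredEC κ ∧ ColoredNA θ κ ∧
    ColoredAC θ κ ∧ ColoredICE2 θ κ ∧ ∀ a : Γ, Nonempty ({x : P // κ x = a} ≃o ℤ)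

end

/-- `ι` realizes the colored poset `A` as an order filter of the colored poset `B`. -/
def FilterEmbedding {G : Type*} {A B : Type*} [PartialOrder A] [PartialOrder B]
    (κ : A → G) (κ' : B → G) (ι : A → B) : Prop :=
  (∀ p q : A, ι p ≤ ι q ↔ p ≤ q) ∧ (∀ p : A, κ' (ι p) = κ p) ∧ IsUpperSet (Set.range ι)

/-- `B` is an extension of `A` by the color `a`, with extending element `x`. -/
def IsExtensionBy {G : Type*} {A B : Type*} [PartialOrder A] [PartialOrder B]
    (θ : G → G → ℤ) (κ : A → G) (κ' : B → G) (a : G) (ι : A → B) (x : B) : Prop :=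
  Finite B ∧ GColoredDComplete θ κ' ∧ ConnectedPoset B ∧
    FilterEmbedding κ κ' ι ∧ (Set.range ι)ᶜ = {x} ∧ κ' x = a

section Aux

variable {Γ : Type u} {P : Type v}

/-- Adjacency is symmetric for a Dynkin datum. -/
lemma adj_symm_aux {θ : Γ → Γ → ℤ} (hθ : DynkinDatum θ) {a b : Γ} (h : θ a b < 0) :
    θ b a < 0 := by
  obtain ⟨h2, hle, hz⟩ := hθ
  have hab : a ≠ b := by rintro rfl; rw [h2] at h; omega
  rcases (hle b a hab.symm).lt_or_eq with h' | h'
  · exact h'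
  · have := (hz a b hab).2 h'
    omega

/-- A nonempty finite chain has a minimum. -/
lemma chain_min_aux [PartialOrder P] [Fintype P] {S : Set P}
    (hc : IsChain (· ≤ ·) S) (hne : S.Nonempty) :
    ∃ m ∈ S, ∀ z ∈ S, m ≤ z := by
  classical
  have hne' : S.toFinite.toFinset.Nonempty := by
    obtain ⟨x, hx⟩ := hne
    exact ⟨x, by simpa using hx⟩
  obtain ⟨m, hm, hmin0⟩ := exists_minimal_of_wellFoundedLT (fun x => x ∈ S.toFinite.toFinset)
    (by obtain ⟨x, hx⟩ := hne'; exact ⟨x, hx⟩)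
  have hmin : ∀ x ∈ S.toFinite.toFinset, ¬x < m := fun x hx hlt => hlt.not_ge (hmin0 hx hlt.le)
  rw [Set.Finite.mem_toFinset] at hm
  refine ⟨m, hm, fun z hz => ?_⟩
  rcases eq_or_ne z m with rfl | hzm
  · exact le_rfl
  · rcases hc hz hm hzm with h | h
    · exact absurd (lt_of_le_of_ne h hzm) (hmin z (by simpa using hz))
    · exact h

/-- A sum of values in `{0,1}` equals the number of ones. -/
lemma sum01_aux {α : Type*} [DecidableEq α] (F : Finset α) (f : α → ℤ)
    (h : ∀ z ∈ F, f z = 0 ∨ f z = 1) :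
    ∑ z ∈ F, f z = ((F.filter (fun z => f z = 1)).card : ℤ) := by
  classical
  rw [← Finset.sum_filter_add_sum_filter_not F (fun z => f z = 1)]
  have h1 : ∑ z ∈ F.filter (fun z => f z = 1), f z
      = ((F.filter (fun z => f z = 1)).card : ℤ) := by
    rw [Finset.sum_congr rfl (fun z hz => (Finset.mem_filter.1 hz).2)]
    simp
  have h2 : ∑ z ∈ F.filter (fun z => ¬f z = 1), f z = 0 := by
    refine Finset.sum_eq_zero fun z hz => ?_
    have hz' := Finset.mem_filter.1 hz
    rcases h z hz'.1 with h0 | h0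
    · exact h0
    · exact absurd h0 hz'.2
  rw [h1, h2, add_zero]

/-- No color is repeated in a finite Γ-colored d-complete poset all of whose
principal filters are chains. -/
lemma no_repeat_aux [PartialOrder P] [Fintype P] (θ : Γ → Γ → ℤ) (κ : P → Γ)
    (hθ : DynkinDatum θ) (hsl : SimplyLaced θ) (hdc : GColoredDComplete θ κ)
    (hch : ∀ x : P, IsChain (· ≤ ·) (Set.Ici x)) :
    ∀ (n : ℕ) (x y : P), (Set.Ici x).toFinite.toFinset.card ≤ n → x < y → κ x = κ y →
      (∀ z ∈ Set.Ioo x y, κ z ≠ κ x) → False := by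
  classical
  obtain ⟨hlf, hsurj, hec, hna, hac, hice, hucb⟩ := hdc
  intro n
  induction n with
  | zero =>
    intro x y hcard _ _ _
    have hx : x ∈ (Set.Ici x).toFinite.toFinset := by simp
    have := Finset.card_pos.mpr ⟨x, hx⟩
    omega
  | succ n ih =>
    intro x y hcard hxy hcol hcons
    set a := κ x with ha
    have hsum : (∑ᶠ z ∈ Set.Ioo x y, -θ (κ z) a) = 2 :=
      hice a x y rfl hcol.symm hxy hcons
    set F := (Set.Ioo x y).toFinite.toFinset with hF
    have hsum' : ∑ z ∈ F, -θ (κ z) a = 2 := by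
      rwa [← Set.Finite.coe_toFinset (Set.Ioo x y).toFinite, finsum_mem_coe_finset] at hsum
    set A := F.filter (fun z => -θ (κ z) a = 1) with hA
    have h01 : ∀ z ∈ F, -θ (κ z) a = 0 ∨ -θ (κ z) a = 1 := by
      intro z hz
      rw [hF, Set.Finite.mem_toFinset] at hz
      have hza : κ z ≠ a := hcons z hz
      rcases hsl (κ z) a hza with h0 | h0 <;> omega
    have hAcard : A.card = 2 := by
      have := sum01_aux F (fun z => -θ (κ z) a) h01
      rw [hsum'] at this
      exact_mod_cast this.symm
    -- minimum u of (x, y]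
    obtain ⟨u, hu, humin⟩ := chain_min_aux
      ((hch x).mono (fun _ hz => hz.1.le)) ⟨y, Set.mem_Ioc.2 ⟨hxy, le_rfl⟩⟩
    have hcov : x ⋖ u := by
      refine ⟨hu.1, fun z hz1 hz2 => ?_⟩
      have : z ∈ Set.Ioc x y := ⟨hz1, hz2.le.trans hu.2⟩
      exact absurd (humin z this) hz2.not_ge
    set d := κ u with hd
    have had : θ a d < 0 := hna x u hcov
    have hda : θ d a < 0 := adj_symm_aux hθ had
    have hdnea : d ≠ a := by
      intro h
      rw [h, hθ.1] at hda; omega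
    have huy : u ≠ y := by
      rintro rfl
      have hAempty : A = ∅ := by
        rw [Finset.eq_empty_iff_forall_notMem]
        intro z hz
        have hzF := (Finset.mem_filter.1 hz).1
        rw [hF, Set.Finite.mem_toFinset] at hzF
        exact absurd (humin z ⟨hzF.1, hzF.2.le⟩) hzF.2.not_ge
      rw [hAempty] at hAcard
      simp at hAcard
    have huIoo : u ∈ Set.Ioo x y := ⟨hu.1, lt_of_le_of_ne hu.2 huy⟩
    have hda' : θ (κ u) a < 0 := hda
    have huA : u ∈ A := by
      refine Finset.mem_filter.2 ⟨by rw [hF, Set.Finite.mem_toFinset]; exact huIoo, ?_⟩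
      rcases hsl (κ u) a (fun h => hdnea h) with h0 | h0 <;> omega
    by_cases hmax : ∀ z : P, κ z = κ u → ¬u < z
    · -- u is the maximal element of its color class: contradict UCB1
      obtain ⟨hUfin, hUle⟩ := hucb u hmax
      obtain ⟨w, hw, hwmin⟩ := chain_min_aux
        ((hch u).mono (fun _ hz => hz.1.le)) ⟨y, Set.mem_Ioc.2 ⟨huIoo.2, le_rfl⟩⟩
      have hwy : w ≠ y := by
        rintro rfl
        -- then A ⊆ {u}, contradicting |A| = 2
        have hle1 : A.card ≤ 1 := by
          refine Finset.card_le_one.2 fun z1 hz1 z2 hz2 => ?_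
          have key : ∀ z ∈ A, z = u := by
            intro z hz
            have hzIoo : z ∈ Set.Ioo x w := by
              have := (Finset.mem_filter.1 hz).1
              rwa [hF, Set.Finite.mem_toFinset] at this
            have hzu : u ≤ z := humin z ⟨hzIoo.1, hzIoo.2.le⟩
            rcases eq_or_ne z u with h | h
            · exact h
            · exact absurd (hwmin z ⟨lt_of_le_of_ne hzu h.symm, hzIoo.2.le⟩)
                hzIoo.2.not_ge
          rw [key z1 hz1, key z2 hz2]
        omega
      have hwIoo : w ∈ Set.Ioo u y := ⟨hw.1, lt_of_le_of_ne hw.2 hwy⟩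
      have hcovw : u ⋖ w := by
        refine ⟨hw.1, fun z hz1 hz2 => ?_⟩
        exact absurd (hwmin z ⟨hz1, hz2.le.trans hw.2⟩) hz2.not_ge
      have hwU : w ∈ USet θ κ u :=
        ⟨hw.1, adj_symm_aux hθ (hna u w hcovw)⟩
      have hyU : y ∈ USet θ κ u := by
        refine ⟨huIoo.2, ?_⟩
        show θ (κ y) d < 0
        rw [← hcol]; exact had
      -- census of U(u) is ≥ 2
      have hUF : (∑ᶠ z ∈ USet θ κ u, -θ (κ z) (κ u))
          = ∑ z ∈ hUfin.toFinset, -θ (κ z) (κ u) := by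
        rw [← finsum_mem_coe_finset, Set.Finite.coe_toFinset]
      have hterm : ∀ z ∈ USet θ κ u, -θ (κ z) (κ u) = 1 → True := fun _ _ _ => trivial
      have hsub : ({w, y} : Finset P) ⊆ hUfin.toFinset := by
        intro z hz
        rw [Set.Finite.mem_toFinset]
        rcases Finset.mem_insert.1 hz with rfl | hz
        · exact hwU
        · rw [Finset.mem_singleton.1 hz]; exact hyU
      have hnonneg : ∀ z ∈ hUfin.toFinset, z ∉ ({w, y} : Finset P) → 0 ≤ -θ (κ z) (κ u) := by
        intro z hz _
        rw [Set.Finite.mem_toFinset] at hz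
        have : θ (κ z) (κ u) < 0 := hz.2
        omega
      have hone : ∀ z : P, θ (κ z) (κ u) < 0 → -θ (κ z) (κ u) = 1 := by
        intro z hz
        have hne : κ z ≠ κ u := by
          rintro he; rw [he, hθ.1] at hz; omega
        rcases hsl (κ z) (κ u) hne with h0 | h0 <;> omega
      have hsum2 : ∑ z ∈ ({w, y} : Finset P), -θ (κ z) (κ u) = 2 := by
        rw [Finset.sum_pair hwy, hone w hwU.2, hone y hyU.2]
        norm_num
      have : (2 : ℤ) ≤ ∑ z ∈ hUfin.toFinset, -θ (κ z) (κ u) := by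
        rw [← hsum2]
        exact Finset.sum_le_sum_of_subset_of_nonneg hsub hnonneg
      rw [← hUF] at this
      omega
    · -- u is not maximal in its class: find the next element of color d above u
      push_neg at hmax
      obtain ⟨z0, hz0col, hz0lt⟩ := hmax
      set S := {z : P | κ z = d ∧ u < z} with hS
      have hSchain : IsChain (· ≤ ·) S := by
        intro p hp q hq hpq
        exact hec p q (hp.1.trans hq.1.symm)
      obtain ⟨w, hwS, hwmin⟩ := chain_min_aux hSchain ⟨z0, hz0col, hz0lt⟩
      have hcard' : (Set.Ici u).toFinite.toFinset.card ≤ n := by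
        have hss : Set.Ici u ⊂ Set.Ici x := by
          constructor
          · exact Set.Ici_subset_Ici.2 hu.1.le
          · intro hsub
            exact absurd (hsub (Set.mem_Ici.2 le_rfl)) hu.1.not_ge
        have := Finset.card_lt_card
          (show (Set.Ici u).toFinite.toFinset ⊂ (Set.Ici x).toFinite.toFinset from
            Set.Finite.toFinset_ssubset_toFinset.2 hss)
        omega
      exact ih u w hcard' hwS.2 hwS.1.symm
        (fun z hz hzc => absurd (hwmin z ⟨hzc, hz.1⟩) hz.2.not_ge)

/-- The coloring is injective. -/
lemma color_inj_aux [PartialOrder P] [Fintype P] (θ : Γ → Γ → ℤ) (κ : P → Γ)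
    (hθ : DynkinDatum θ) (hsl : SimplyLaced θ) (hdc : GColoredDComplete θ κ)
    (hch : ∀ x : P, IsChain (· ≤ ·) (Set.Ici x)) :
    Function.Injective κ := by
  classical
  have key : ∀ x y : P, x < y → κ x = κ y → False := by
    intro x y hxy hcol
    set S := {z : P | κ z = κ x ∧ x < z} with hS
    have hSchain : IsChain (· ≤ ·) S := by
      intro p hp q hq hpq
      exact hdc.2.2.1 p q (hp.1.trans hq.1.symm)
    obtain ⟨w, hwS, hwmin⟩ := chain_min_aux hSchain ⟨y, hcol.symm, hxy⟩
    exact no_repeat_aux θ κ hθ hsl hdc hch (Set.Ici x).toFinite.toFinset.card x w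
      le_rfl hwS.2 hwS.1.symm
      (fun z hz hzc => absurd (hwmin z ⟨hzc, hz.1⟩) hz.2.not_ge)
  intro x y hxy
  by_contra hne
  rcases hdc.2.2.1 x y hxy with h | h
  · exact key x y (lt_of_le_of_ne h hne) hxy
  · exact key y x (lt_of_le_of_ne h (Ne.symm hne)) hxy.symm

end Aux

/-- For a connected finite Γ-colored d-complete poset with Γ simply
laced that is its own top tree, with a unique element s covering two elements and all
other elements covering at most one, every lower frontier census is ≤ 2 and equals 2
exactly at the color of s. -/
theorem topTree_census [Fintype Γ] [PartialOrder P] [Fintype P] [Nonempty P]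
    (θ : Γ → Γ → ℤ) (κ : P → Γ) (hθ : DynkinDatum θ) (hsl : SimplyLaced θ)
    (hdc : GColoredDComplete θ κ) (hconn : ConnectedPoset P)
    (hch : ∀ x : P, IsChain (· ≤ ·) (Set.Ici x))
    (s : P) (hs : {x : P | x ⋖ s}.ncard = 2)
    (hother : ∀ t : P, t ≠ s → {x : P | x ⋖ t}.ncard ≤ 1) :
    ∀ b : Γ, ∀ y : P, κ y = b → (∀ z : P, κ z = b → y ≤ z) →
      LCensus θ κ y ≤ 2 ∧ (LCensus θ κ y = 2 ↔ b = κ s) := by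
  classical
  have hinj : Function.Injective κ := color_inj_aux θ κ hθ hsl hdc hch
  obtain ⟨hlf, hsurj, hec, hna, hac, hice, hucb⟩ := hdc
  intro b y hyb _
  -- LSet y equals the set of lower covers of y
  have hset : LSet θ κ y = {x : P | x ⋖ y} := by
    ext x
    constructor
    · rintro ⟨hxy, hadj⟩
      refine ⟨hxy, fun z hz1 hz2 => ?_⟩
      exfalso
      have hmax : ∀ z' : P, κ z' = κ x → ¬x < z' := by
        intro z' hz'
        rw [hinj hz']
        exact lt_irrefl x
      obtain ⟨hUfin, hUle⟩ := hucb x hmax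
      obtain ⟨u, hu, humin⟩ := chain_min_aux
        ((hch x).mono (fun _ hz => hz.1.le)) ⟨y, Set.mem_Ioc.2 ⟨hxy, le_rfl⟩⟩
      have hcov : x ⋖ u := by
        refine ⟨hu.1, fun v hv1 hv2 => ?_⟩
        exact absurd (humin v ⟨hv1, hv2.le.trans hu.2⟩) hv2.not_ge
      have huy : u ≠ y := by
        rintro rfl
        exact absurd (humin z ⟨hz1, hz2.le⟩) hz2.not_ge
      have huU : u ∈ USet θ κ x := ⟨hu.1, adj_symm_aux hθ (hna x u hcov)⟩
      have hyU : y ∈ USet θ κ x := ⟨hxy, adj_symm_aux hθ hadj⟩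
      have hone : ∀ v : P, θ (κ v) (κ x) < 0 → -θ (κ v) (κ x) = 1 := by
        intro v hv
        have hne : κ v ≠ κ x := by
          rintro he; rw [he, hθ.1] at hv; omega
        rcases hsl (κ v) (κ x) hne with h0 | h0 <;> omega
      have hsub : ({u, y} : Finset P) ⊆ hUfin.toFinset := by
        intro v hv
        rw [Set.Finite.mem_toFinset]
        rcases Finset.mem_insert.1 hv with rfl | hv
        · exact huU
        · rw [Finset.mem_singleton.1 hv]; exact hyU
      have hnonneg : ∀ v ∈ hUfin.toFinset, v ∉ ({u, y} : Finset P) →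
          0 ≤ -θ (κ v) (κ x) := by
        intro v hv _
        rw [Set.Finite.mem_toFinset] at hv
        have : θ (κ v) (κ x) < 0 := hv.2
        omega
      have hsum2 : ∑ v ∈ ({u, y} : Finset P), -θ (κ v) (κ x) = 2 := by
        rw [Finset.sum_pair huy, hone u huU.2, hone y hyU.2]
        norm_num
      have hge : (2 : ℤ) ≤ ∑ v ∈ hUfin.toFinset, -θ (κ v) (κ x) := by
        rw [← hsum2]
        exact Finset.sum_le_sum_of_subset_of_nonneg hsub hnonneg
      rw [← Set.Finite.coe_toFinset hUfin, finsum_mem_coe_finset] at hUle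
      omega
    · intro h
      exact ⟨h.lt, hna x y h⟩
  -- compute the census as the number of lower covers
  have hcensus : LCensus θ κ y = ({x : P | x ⋖ y}.ncard : ℤ) := by
    unfold LCensus
    rw [hset]
    rw [← Set.Finite.coe_toFinset {x : P | x ⋖ y}.toFinite, finsum_mem_coe_finset]
    have hone : ∀ x ∈ {x : P | x ⋖ y}.toFinite.toFinset, -θ (κ x) (κ y) = 1 := by
      intro x hx
      rw [Set.Finite.mem_toFinset] at hx
      have hadj : θ (κ x) (κ y) < 0 := hna x y hx
      have hne : κ x ≠ κ y := by
        rintro he; rw [he, hθ.1] at hadj; omega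
      rcases hsl (κ x) (κ y) hne with h0 | h0 <;> omega
    rw [Finset.sum_congr rfl hone, Finset.sum_const, nsmul_eq_mul, mul_one,
      Set.ncard_coe_finset]
  by_cases hys : y = s
  · subst hys
    rw [hcensus, hs]
    refine ⟨le_rfl, ?_⟩
    constructor
    · intro _; rw [← hyb]
    · intro _; norm_num
  · have hle1 : {x : P | x ⋖ y}.ncard ≤ 1 := hother y hys
    constructor
    · rw [hcensus]; exact_mod_cast le_trans (Nat.cast_le.2 hle1) (by norm_num)
    · constructor
      · intro h2
        rw [hcensus] at h2
        have : {x : P | x ⋖ y}.ncard = 2 := by exact_mod_cast h2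
        omega
      · intro hbs
        exact absurd (hinj (hyb.trans hbs)) hys
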